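/- arXiv:2307.04224 — 4 statements merged into one kernel-verified Lean document; each statement's English description precedes it below -/
import Mathlib

section
/- Let d_1,…,d_r be positive integers and d = d_1+⋯+d_r. For every θ = (θ_1,…,θ_r) ∈ ℝ^r with θ_1²+⋯+θ_r² = 1 one has ∑_{i=1}^r (θ_i² − θ_i⁴/d_i) ≤ (d−1)/d, with equality if and only if θ_i² = d_i/d for every i. -/
open scoped BigOperators

/-- for positive integers `d₁, …, d_r` with `d = d₁ + ⋯ + d_r` and any
`θ ∈ ℝ^r` with `∑ θᵢ² = 1`, one has `∑ᵢ (θᵢ² − θᵢ⁴/dᵢ) ≤ (d−1)/d`, with equality iff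
`θᵢ² = dᵢ/d` for every `i`. -/
theorem sum_theta_le (r : ℕ) (d : Fin r → ℕ) (hd : ∀ i, 0 < d i)
    (θ : Fin r → ℝ) (hθ : ∑ i, θ i ^ 2 = 1) :
    (∑ i, (θ i ^ 2 - θ i ^ 4 / (d i : ℝ))) ≤ ((∑ i, d i : ℝ) - 1) / (∑ i, d i : ℝ) ∧
    ((∑ i, (θ i ^ 2 - θ i ^ 4 / (d i : ℝ))) = ((∑ i, d i : ℝ) - 1) / (∑ i, d i : ℝ) ↔
      ∀ i, θ i ^ 2 = (d i : ℝ) / (∑ i, d i : ℝ)) := by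
  rcases Nat.eq_zero_or_pos r with hr | hr
  · subst hr; simp at hθ
  have : Nonempty (Fin r) := ⟨⟨0, hr⟩⟩
  set D : ℝ := ∑ i, (d i : ℝ) with hD
  have hdpos : ∀ i, (0:ℝ) < (d i : ℝ) := fun i => by exact_mod_cast hd i
  have hDpos : 0 < D := Finset.sum_pos (fun i _ => hdpos i) Finset.univ_nonempty
  have hDne : D ≠ 0 := hDpos.ne'
  set E : ℝ := ∑ i, (d i : ℝ) * (θ i ^ 2 / (d i : ℝ) - 1 / D) ^ 2 with hE
  have expand : ∀ i, (d i : ℝ) * (θ i ^ 2 / (d i : ℝ) - 1 / D) ^ 2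
      = θ i ^ 4 / (d i : ℝ) - 2 / D * θ i ^ 2 + (d i : ℝ) / D ^ 2 := by
    intro i
    have h1 : (d i : ℝ) ≠ 0 := (hdpos i).ne'
    field_simp
    ring
  have key : (∑ i, (θ i ^ 2 - θ i ^ 4 / (d i : ℝ))) = (D - 1) / D - E := by
    have hE' : E = (∑ i, θ i ^ 4 / (d i : ℝ)) - 2 / D * (∑ i, θ i ^ 2)
        + D / D ^ 2 := by
      rw [hE]
      rw [Finset.sum_congr rfl fun i _ => expand i]
      rw [Finset.sum_add_distrib, Finset.sum_sub_distrib, ← Finset.mul_sum,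
        ← Finset.sum_div]
    rw [hE', hθ, Finset.sum_sub_distrib, hθ]
    field_simp
    ring
  have hterm : ∀ i ∈ Finset.univ, (0:ℝ) ≤ (d i : ℝ) * (θ i ^ 2 / (d i : ℝ) - 1 / D) ^ 2 :=
    fun i _ => mul_nonneg (hdpos i).le (sq_nonneg _)
  have hEnn : 0 ≤ E := Finset.sum_nonneg hterm
  constructor
  · rw [key]; linarith
  · rw [key]
    constructor
    · intro h
      have hE0 : E = 0 := by linarith
      have := (Finset.sum_eq_zero_iff_of_nonneg hterm).mp hE0
      intro i
      have hi := this i (Finset.mem_univ i)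
      have h2 : (θ i ^ 2 / (d i : ℝ) - 1 / D) ^ 2 = 0 := by
        rcases mul_eq_zero.mp hi with h | h
        · exact absurd h (hdpos i).ne'
        · exact h
      have h3 : θ i ^ 2 / (d i : ℝ) - 1 / D = 0 := pow_eq_zero_iff (n := 2) (by norm_num) |>.mp h2
      have h4 : θ i ^ 2 / (d i : ℝ) = 1 / D := by linarith
      rw [div_eq_div_iff (hdpos i).ne' hDne] at h4
      rw [eq_div_iff hDne]
      linarith
    · intro h
      have hE0 : E = 0 := by
        apply Finset.sum_eq_zero
        intro i _
        have : θ i ^ 2 / (d i : ℝ) - 1 / D = 0 := by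
          rw [h i, div_div, mul_comm, ← div_div, div_self (hdpos i).ne', sub_self]
        rw [this]
        simp
      rw [hE0]; ring
end

section
/- Let ℓ_1,…,ℓ_r be unit vectors, ℓ_i ∈ EuclideanSpace ℝ (Fin (n_i+1)), and let v_i, w_i satisfy ⟨v_i,ℓ_i⟩ = ⟨w_i,ℓ_i⟩ = 0 for each i. Then the Fréchet derivative DΨ(ℓ) of Ψ at ℓ = (ℓ_1,…,ℓ_r) satisfies ⟨DΨ(ℓ)(v_1,…,v_r), DΨ(ℓ)(w_1,…,w_r)⟩ = ∑_{i=1}^r d_i·⟨v_i,w_i⟩. (Hence, up to the scaling factors sqrt(d_i) in each factor, the parametrization Ψ of the Segre–Veronese manifold by the product of unit spheres is a local isometry.) -/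
open scoped RealInnerProductSpace BigOperators

noncomputable section

/-- The set of exponent vectors `α : Fin (n+1) → ℕ` with `|α| = d`. -/
abbrev Exps (n d : ℕ) : Type := {α : Fin (n + 1) → ℕ // ∑ i, α i = d}

instance (n d : ℕ) : Fintype (Exps n d) :=
  Fintype.subtype (Finset.Nat.antidiagonalTuple (n + 1) d) fun _ =>
    Finset.Nat.mem_antidiagonalTuple

/-- The Veronese map in Bombieri–Weyl coordinates. -/
def veronese (n d : ℕ) (ℓ : EuclideanSpace ℝ (Fin (n + 1))) :
    EuclideanSpace ℝ (Exps n d) := WithLp.toLp 2 fun α =>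
  Real.sqrt ((d.factorial : ℝ) / ∏ i, ((α.1 i).factorial : ℝ)) * ∏ i, ℓ i ^ α.1 i

/-- The Segre–Veronese parametrization. -/
def Psi (r : ℕ) (n d : Fin r → ℕ)
    (ℓ : (i : Fin r) → EuclideanSpace ℝ (Fin (n i + 1))) :
    EuclideanSpace ℝ ((i : Fin r) → Exps (n i) (d i)) := WithLp.toLp 2 fun α =>
  ∏ i, veronese (n i) (d i) (ℓ i) (α i)



lemma veronese_inner (n d : ℕ) (x y : EuclideanSpace ℝ (Fin (n + 1))) :
    ⟪veronese n d x, veronese n d y⟫ = ⟪x, y⟫ ^ d := by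
  classical
  have hterm : ∀ α : Exps n d,
      veronese n d x α * veronese n d y α =
        (Nat.multinomial Finset.univ α.1 : ℝ) * ∏ i, (x i * y i) ^ α.1 i := by
    intro α
    have hpos : (0:ℝ) < ∏ i, ((α.1 i).factorial : ℝ) :=
      Finset.prod_pos fun i _ => by exact_mod_cast (α.1 i).factorial_pos
    have hc : ((d.factorial : ℝ) / ∏ i, ((α.1 i).factorial : ℝ)) =
        (Nat.multinomial Finset.univ α.1 : ℝ) := by
      have hs := Nat.multinomial_spec Finset.univ α.1
      rw [α.2] at hs
      field_simp
      rw [← hs]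
      push_cast
      ring
    simp only [veronese, PiLp.toLp_apply]
    rw [mul_mul_mul_comm,
      Real.mul_self_sqrt (by positivity), hc, Finset.prod_mul_distrib.symm]
    simp [mul_pow]
  have hinner : ⟪x, y⟫ = ∑ i, x i * y i := by
    simp [PiLp.inner_apply, RCLike.inner_apply, mul_comm]
  rw [hinner, Finset.sum_pow_eq_sum_piAntidiag,
    Finset.piAntidiag_univ_fin_eq_antidiagonalTuple, PiLp.inner_apply]
  rw [Finset.sum_subtype (Finset.Nat.antidiagonalTuple (n + 1) d)
    (fun k => Finset.Nat.mem_antidiagonalTuple)]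
  simp only [RCLike.inner_apply, conj_trivial]
  exact Finset.sum_congr rfl fun α _ => by rw [mul_comm]; exact hterm α

lemma Psi_inner (r : ℕ) (n d : Fin r → ℕ)
    (x y : (i : Fin r) → EuclideanSpace ℝ (Fin (n i + 1))) :
    ⟪Psi r n d x, Psi r n d y⟫ = ∏ i, ⟪x i, y i⟫ ^ d i := by
  classical
  have h : ∀ i : Fin r,
      ⟪x i, y i⟫ ^ d i = ⟪veronese (n i) (d i) (x i), veronese (n i) (d i) (y i)⟫ :=
    fun i => (veronese_inner _ _ _ _).symm
  simp_rw [h, PiLp.inner_apply, RCLike.inner_apply, conj_trivial]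
  rw [Finset.prod_univ_sum, Fintype.piFinset_univ]
  refine Finset.sum_congr rfl fun α _ => ?_
  simp [Psi, Finset.prod_mul_distrib]

lemma differentiable_prod' {E : Type*} [NormedAddCommGroup E] [NormedSpace ℝ E]
    {ι : Type*} (u : Finset ι) (f : ι → E → ℝ) (hf : ∀ i, Differentiable ℝ (f i)) :
    Differentiable ℝ (fun x => ∏ i ∈ u, f i x) := by
  classical
  induction u using Finset.induction with
  | empty => simpa using differentiable_const (1:ℝ)
  | @insert a s h ih =>
    simp only [Finset.prod_insert h]
    exact (hf a).mul ih

lemma differentiable_Psi (r : ℕ) (n d : Fin r → ℕ) :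
    Differentiable ℝ (Psi r n d) := by
  have key : Differentiable ℝ (fun (ℓ : (i : Fin r) → EuclideanSpace ℝ (Fin (n i + 1)))
      (α : (i : Fin r) → Exps (n i) (d i)) => ∏ i, veronese (n i) (d i) (ℓ i) (α i)) := by
    refine differentiable_pi.mpr fun α => ?_
    refine differentiable_prod' Finset.univ _ fun i => ?_
    simp only [veronese, PiLp.toLp_apply]
    refine Differentiable.const_mul ?_ _
    refine differentiable_prod' Finset.univ _ fun j => ?_
    exact (((EuclideanSpace.proj j).comp
      (ContinuousLinearMap.proj (R := ℝ)
        (φ := fun i => EuclideanSpace ℝ (Fin (n i + 1))) i)).differentiable).pow _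
  exact ((PiLp.continuousLinearEquiv 2 ℝ
    (fun _ : (i : Fin r) → Exps (n i) (d i) => ℝ)).symm.differentiable).comp key


/-- on tangent vectors of the product of unit spheres, the Fréchet
derivative of `Ψ` satisfies
`⟨DΨ(ℓ)v, DΨ(ℓ)w⟩ = ∑ᵢ dᵢ ⟨vᵢ, wᵢ⟩`. -/
theorem fderiv_Psi_inner (r : ℕ) (n d : Fin r → ℕ) (hn : ∀ i, 0 < n i)
    (hd : ∀ i, 0 < d i)
    (ℓ v w : (i : Fin r) → EuclideanSpace ℝ (Fin (n i + 1)))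
    (hℓ : ∀ i, ‖ℓ i‖ = 1) (hv : ∀ i, ⟪v i, ℓ i⟫ = 0) (hw : ∀ i, ⟪w i, ℓ i⟫ = 0) :
    ⟪fderiv ℝ (Psi r n d) ℓ v, fderiv ℝ (Psi r n d) ℓ w⟫ =
      ∑ i, (d i : ℝ) * ⟪v i, w i⟫ := by
  classical
  set c : Fin r → ℝ := fun i => ⟪v i, w i⟫ with hc
  set C : ℝ := ∑ i, (d i : ℝ) * c i with hC
  set A := fderiv ℝ (Psi r n d) ℓ v with hA
  set B := fderiv ℝ (Psi r n d) ℓ w with hB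
  have hlinev : ∀ u : (i : Fin r) → EuclideanSpace ℝ (Fin (n i + 1)),
      HasDerivAt (fun t : ℝ => ℓ + t • u) u 0 := by
    intro u
    have h := ((hasDerivAt_id (0:ℝ)).smul_const u).const_add ℓ
    simpa using h
  have hPsiLine : ∀ u, HasDerivAt (fun t : ℝ => Psi r n d (ℓ + t • u))
      (fderiv ℝ (Psi r n d) ℓ u) 0 := by
    intro u
    have h := (((differentiable_Psi r n d) (ℓ + (0:ℝ) • u)).hasFDerivAt).comp_hasDerivAt 0
      (hlinev u)
    simp only [zero_smul, add_zero] at h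
    exact h
  have hG : ∀ t s : ℝ, ⟪Psi r n d (ℓ + t • v), Psi r n d (ℓ + s • w)⟫ =
      ∏ i, (1 + (t * c i) * s) ^ d i := by
    intro t s
    rw [Psi_inner]
    refine Finset.prod_congr rfl fun i _ => ?_
    have h1 : ⟪ℓ i, ℓ i⟫ = 1 := by
      rw [real_inner_self_eq_norm_sq, hℓ i]; norm_num
    have h2 : ⟪ℓ i, w i⟫ = 0 := by rw [real_inner_comm]; exact hw i
    congr 1
    show ⟪ℓ i + t • v i, ℓ i + s • w i⟫ = 1 + t * c i * s
    rw [inner_add_left, inner_add_right, inner_add_right,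
      real_inner_smul_left, real_inner_smul_left, real_inner_smul_right,
      real_inner_smul_right, h1, h2, hv i]
    simp only [hc]
    ring
  have hstep1 : ∀ t : ℝ, ⟪Psi r n d (ℓ + t • v), B⟫ = t * C := by
    intro t
    have hD1 : HasDerivAt (fun s : ℝ => ⟪Psi r n d (ℓ + t • v), Psi r n d (ℓ + s • w)⟫)
        (⟪Psi r n d (ℓ + t • v), B⟫) 0 := by
      have h := (hasDerivAt_const (0:ℝ) (Psi r n d (ℓ + t • v))).inner (𝕜 := ℝ) (hPsiLine w)
      simpa using h
    have hD2 : HasDerivAt (fun s : ℝ => ∏ i, (1 + (t * c i) * s) ^ d i) (t * C) 0 := by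
      have hfac : ∀ i : Fin r, HasDerivAt (fun s : ℝ => (1 + (t * c i) * s) ^ d i)
          ((d i : ℝ) * (1 + (t * c i) * 0) ^ (d i - 1) * (t * c i)) 0 := by
        intro i
        have hbase : HasDerivAt (fun s : ℝ => 1 + (t * c i) * s) (t * c i) 0 := by
          simpa using ((hasDerivAt_id (0:ℝ)).const_mul (t * c i)).const_add 1
        simpa using hbase.fun_pow (d i)
      have h := HasDerivAt.fun_finsetProd (u := Finset.univ) (fun i _ => hfac i)
      have hval : (∑ i, (∏ j ∈ Finset.univ.erase i, (1 + (t * c j) * (0:ℝ)) ^ d j) •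
          ((d i : ℝ) * (1 + (t * c i) * 0) ^ (d i - 1) * (t * c i))) = t * C := by
        simp only [mul_zero, add_zero, one_pow, Finset.prod_const_one, one_smul, smul_eq_mul]
        rw [hC, Finset.mul_sum]
        exact Finset.sum_congr rfl fun i _ => by ring
      rw [hval] at h
      exact h
    have hfun : (fun s : ℝ => ⟪Psi r n d (ℓ + t • v), Psi r n d (ℓ + s • w)⟫) =
        fun s : ℝ => ∏ i, (1 + (t * c i) * s) ^ d i := funext fun s => hG t s
    rw [hfun] at hD1
    exact hD1.unique hD2
  have hD3 : HasDerivAt (fun t : ℝ => ⟪Psi r n d (ℓ + t • v), B⟫) ⟪A, B⟫ 0 := by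
    have h := (hPsiLine v).inner (𝕜 := ℝ) (hasDerivAt_const (0:ℝ) B)
    simpa using h
  have hD4 : HasDerivAt (fun t : ℝ => t * C) C 0 := by
    simpa using (hasDerivAt_id (0:ℝ)).mul_const C
  have hfun2 : (fun t : ℝ => ⟪Psi r n d (ℓ + t • v), B⟫) = fun t : ℝ => t * C :=
    funext hstep1
  rw [hfun2] at hD3
  have hfinal : ⟪A, B⟫ = C := hD3.unique hD4
  rw [hA, hB] at hfinal
  rw [hfinal, hC]
end
end

section
/- For every polynomial f ∈ MvPolynomial (Fin (n+1)) ℝ that is homogeneous of degree d and every ℓ = (ℓ_0,…,ℓ_n) ∈ ℝ^{n+1}, the Bombieri–Weyl inner product of f with the d-th power of the linear form ℓ_0X_0+⋯+ℓ_nX_n reproduces evaluation: ⟨f, (ℓ_0X_0+⋯+ℓ_nX_n)^d⟩_BW = f(ℓ_0,…,ℓ_n). -/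
open scoped BigOperators

open MvPolynomial

lemma coeff_linear_pow {m d : ℕ} (ℓ : Fin m → ℝ) (α : Fin m →₀ ℕ)
    (hα : ∑ i, α i = d) :
    coeff α ((∑ i, C (ℓ i) * X i) ^ d) =
      (Nat.multinomial Finset.univ α : ℝ) * ∏ i, ℓ i ^ α i := by
  rw [Finset.sum_pow_eq_sum_piAntidiag]
  have hterm : ∀ k : Fin m → ℕ,
      ((Nat.multinomial Finset.univ k : MvPolynomial (Fin m) ℝ) *
          ∏ i, (C (ℓ i) * X i) ^ k i) =
        monomial (Finsupp.equivFunOnFinite.symm k)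
          ((Nat.multinomial Finset.univ k : ℝ) * ∏ i, ℓ i ^ k i) := by
    intro k
    simp only [mul_pow, ← C_pow]
    rw [Finset.prod_mul_distrib, ← map_prod, ← C_eq_coe_nat, ← mul_assoc, ← map_mul,
      monomial_eq]
    congr 1
    rw [Finsupp.prod_fintype]
    · rfl
    · intro i; exact pow_zero _
  simp only [coeff_sum, hterm, coeff_monomial]
  rw [Finset.sum_eq_single (⇑α)]
  · rw [if_pos (by simp)]
  · intro k hk hne
    rw [if_neg]
    intro h
    apply hne
    have := congrArg (⇑Finsupp.equivFunOnFinite) h.symm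
    exact this.symm
  · intro h
    exact absurd (by simp [Finset.mem_piAntidiag, hα]) h

/-- reproducing property of the Bombieri–Weyl inner product: for a
polynomial `f` homogeneous of degree `d` and a linear form `ℓ₀X₀ + ⋯ + ℓₙXₙ`, the
Bombieri–Weyl inner product
`⟨f, g⟩ = ∑_{|α| = d} coeff α f · coeff α g · (α₀!⋯αₙ!)/d!` of `f` with the `d`-th
power of the linear form equals the evaluation `f(ℓ₀, …, ℓₙ)`. (Since `f` is
homogeneous of degree `d`, summing over the support of `f` is the same as summing
over all `α` with `|α| = d`.) -/
theorem bombieriWeyl_reproducing (n d : ℕ) (hn : 0 < n) (hd : 0 < d)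
    (f : MvPolynomial (Fin (n + 1)) ℝ) (hf : f.IsHomogeneous d)
    (ℓ : Fin (n + 1) → ℝ) :
    ∑ α ∈ f.support,
        coeff α f * coeff α ((∑ i, C (ℓ i) * X i) ^ d) *
          ((∏ i, Nat.factorial (α i) : ℕ) : ℝ) / (Nat.factorial d : ℝ) =
      eval ℓ f := by
  rw [eval_eq']
  apply Finset.sum_congr rfl
  intro α hα
  have hαd : ∑ i, α i = d := by
    have h1 := hf (mem_support_iff.mp hα)
    change Finsupp.weight (fun _ => 1) α = d at h1
    rw [← Finsupp.degree_eq_weight_one, Finsupp.degree_apply] at h1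
    rw [← h1]
    exact (Finset.sum_subset (Finset.subset_univ _) (by
      intro i _ hi
      simpa using Finsupp.notMem_support_iff.mp hi)).symm
  rw [coeff_linear_pow ℓ α hαd]
  have hspec : ((∏ i, Nat.factorial (α i)) * Nat.multinomial Finset.univ ⇑α : ℕ) =
      Nat.factorial d := by
    rw [Nat.multinomial_spec, hαd]
  have hd' : (Nat.factorial d : ℝ) ≠ 0 := Nat.cast_ne_zero.mpr (Nat.factorial_ne_zero d)
  field_simp
  push_cast [← hspec]
  ring
end

section
/- Let d = (d_1,…,d_r) be a tuple of positive integers and m_1,…,m_r nonnegative integers with m = m_1+⋯+m_r. Let L be the random real symmetric m×m matrix whose entries (L_{ij})_{i≤j} are independent centered real Gaussian random variables with, for i < j, Var(L_{ij}) = d_k(d_k−1) if i and j lie in the same group I_k of the partition and Var(L_{ij}) = 1 if they lie in different groups, the diagonal entries being centered Gaussians (of arbitrary variance), and L_{ji} = L_{ij}. Then E[det L] = D_d(m_1,…,m_r). -/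
open scoped BigOperators NNReal
open MeasureTheory ProbabilityTheory
open Real
open scoped ENNReal

noncomputable section

/-- The vertex set `{1, …, m}` with `m = m₁ + ⋯ + m_r`, partitioned into groups
`I₁, …, I_r` with `|I_k| = m_k`. -/
abbrev GroupedIdx (r : ℕ) (m : Fin r → ℕ) : Type := Σ k : Fin r, Fin (m k)

/-- The position of a vertex in the consecutive ordering of the groups `I₁, …, I_r`. -/
def idx (r : ℕ) (m : Fin r → ℕ) (p : GroupedIdx r m) : ℕ :=
  (∑ j ∈ Finset.univ.filter (fun j => j < p.1), m j) + p.2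

/-- The weight of the pair `{a, b}`: `d_k (d_k − 1)` if `a` and `b` lie in the same
group `I_k`, and `1` if they lie in different groups. -/
def pairWeight (r : ℕ) (d : Fin r → ℕ) (m : Fin r → ℕ) (a b : GroupedIdx r m) : ℝ :=
  if a.1 = b.1 then (d a.1 * (d a.1 - 1) : ℕ) else 1

lemma gauss_pdf_smul (v : ℝ≥0) (hv : v ≠ 0) (f : ℝ → ℝ) (x : ℝ) :
    (gaussianPDFReal 0 v x).toNNReal • f x
      = (Real.sqrt (2 * π * v))⁻¹ * (f x * Real.exp (-(2 * (v:ℝ))⁻¹ * x ^ 2)) := by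
  rw [NNReal.smul_def, Real.coe_toNNReal _ (gaussianPDFReal_nonneg _ _ _)]
  unfold gaussianPDFReal
  rw [smul_eq_mul]
  have harg : -(x - 0) ^ 2 / (2 * (v:ℝ)) = -(2 * (v:ℝ))⁻¹ * x ^ 2 := by
    rw [sub_zero]; ring
  rw [harg]
  ring

lemma gauss_density (v : ℝ≥0) (hv : v ≠ 0) :
    gaussianReal 0 v = volume.withDensity fun x => ((gaussianPDFReal 0 v x).toNNReal : ℝ≥0∞) :=
  gaussianReal_of_var_ne_zero 0 hv

lemma integrable_pow_gaussianReal (v : ℝ≥0) (n : ℕ) :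
    Integrable (fun x : ℝ => x ^ n) (gaussianReal 0 v) := by
  by_cases hv : v = 0
  · subst hv
    rw [gaussianReal_zero_var]
    refine (integrable_const ((0:ℝ) ^ n)).congr ?_
    rw [Filter.EventuallyEq, ae_dirac_eq]
    exact Filter.eventually_pure.mpr rfl
  · have hvpos : (0:ℝ) < (v:ℝ) := by positivity
    have hb : (0:ℝ) < (2 * (v:ℝ))⁻¹ := by positivity
    rw [gauss_density v hv,
      integrable_withDensity_iff_integrable_smul ((measurable_gaussianPDFReal 0 v).real_toNNReal)]
    have heq : (fun x : ℝ => (gaussianPDFReal 0 v x).toNNReal • x ^ n)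
        = fun x => (Real.sqrt (2 * π * v))⁻¹ * (x ^ n * Real.exp (-(2 * (v:ℝ))⁻¹ * x ^ 2)) :=
      funext fun x => gauss_pdf_smul v hv _ x
    rw [heq]
    refine Integrable.const_mul ?_ _
    have := integrable_rpow_mul_exp_neg_mul_sq hb (s := (n:ℝ))
      (lt_of_lt_of_le (by norm_num) (Nat.cast_nonneg n))
    simpa [Real.rpow_natCast] using this

lemma integral_pow_zero_gaussianReal (v : ℝ≥0) :
    ∫ x, x ^ 0 ∂(gaussianReal 0 v) = 1 := by
  simp

lemma integral_id_gaussianReal (v : ℝ≥0) :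
    ∫ x, x ^ 1 ∂(gaussianReal 0 v) = 0 := by
  by_cases hv : v = 0
  · subst hv; rw [gaussianReal_zero_var]; simp [integral_dirac]
  · have hvpos : (0:ℝ) < (v:ℝ) := by positivity
    have hb : (0:ℝ) < (2 * (v:ℝ))⁻¹ := by positivity
    rw [gauss_density v hv,
      integral_withDensity_eq_integral_smul ((measurable_gaussianPDFReal 0 v).real_toNNReal)]
    have heq : (fun x : ℝ => (gaussianPDFReal 0 v x).toNNReal • x ^ 1)
        = fun x => (Real.sqrt (2 * π * v))⁻¹ * (x ^ 1 * Real.exp (-(2 * (v:ℝ))⁻¹ * x ^ 2)) :=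
      funext fun x => gauss_pdf_smul v hv _ x
    rw [heq, integral_const_mul]
    have hodd : ∫ x : ℝ, x ^ 1 * Real.exp (-(2 * (v:ℝ))⁻¹ * x ^ 2) = 0 := by
      set b := (2 * (v:ℝ))⁻¹
      have h := integral_neg_eq_self (fun x : ℝ => x ^ 1 * Real.exp (-b * x ^ 2)) volume
      simp only [pow_one, neg_sq, neg_mul, neg_neg] at h ⊢
      rw [integral_neg] at h
      linarith
    rw [hodd, mul_zero]

lemma integral_sq_exp (b : ℝ) (hb : 0 < b) :
    ∫ x : ℝ, x ^ 2 * Real.exp (-b * x ^ 2) = (2 * b)⁻¹ * Real.sqrt (π / b) := by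
  have hint2 : Integrable fun x : ℝ => x ^ 2 * Real.exp (-b * x ^ 2) := by
    have := integrable_rpow_mul_exp_neg_mul_sq hb (s := ((2:ℕ):ℝ)) (by norm_num)
    simpa [Real.rpow_natCast] using this
  have hderiv : ∀ x : ℝ, HasDerivAt (fun x : ℝ => x * Real.exp (-b * x ^ 2))
      (Real.exp (-b * x ^ 2) - 2 * b * (x ^ 2 * Real.exp (-b * x ^ 2))) x := by
    intro x
    have h1 : HasDerivAt (fun x : ℝ => -b * x ^ 2) (-b * (2 * x)) x := by
      simpa using ((hasDerivAt_pow 2 x).const_mul (-b))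
    have h2 : HasDerivAt (fun x : ℝ => Real.exp (-b * x ^ 2))
        (Real.exp (-b * x ^ 2) * (-b * (2 * x))) x := h1.exp
    have h3 : HasDerivAt (fun x : ℝ => x * Real.exp (-b * x ^ 2))
        (1 * Real.exp (-b * x ^ 2) + x * (Real.exp (-b * x ^ 2) * (-b * (2 * x)))) x :=
      (hasDerivAt_id' x).mul h2
    convert h3 using 1
    ring
  have hint' : Integrable fun x : ℝ =>
      Real.exp (-b * x ^ 2) - 2 * b * (x ^ 2 * Real.exp (-b * x ^ 2)) :=
    (integrable_exp_neg_mul_sq hb).sub (hint2.const_mul _)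
  have hzero := integral_eq_zero_of_hasDerivAt_of_integrable hderiv hint'
    (integrable_mul_exp_neg_mul_sq hb)
  rw [integral_sub (integrable_exp_neg_mul_sq hb) (hint2.const_mul _),
    integral_const_mul, integral_gaussian] at hzero
  have hb2 : (2 * b) ≠ 0 := by positivity
  rw [inv_mul_eq_div, eq_div_iff hb2]
  linear_combination -hzero

lemma integral_sq_gaussianReal (v : ℝ≥0) :
    ∫ x, x ^ 2 ∂(gaussianReal 0 v) = (v : ℝ) := by
  by_cases hv : v = 0
  · subst hv; rw [gaussianReal_zero_var]; simp [integral_dirac]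
  · have hvpos : (0:ℝ) < (v:ℝ) := by positivity
    have hb : (0:ℝ) < (2 * (v:ℝ))⁻¹ := by positivity
    rw [gauss_density v hv,
      integral_withDensity_eq_integral_smul ((measurable_gaussianPDFReal 0 v).real_toNNReal)]
    have heq : (fun x : ℝ => (gaussianPDFReal 0 v x).toNNReal • x ^ 2)
        = fun x => (Real.sqrt (2 * π * v))⁻¹ * (x ^ 2 * Real.exp (-(2 * (v:ℝ))⁻¹ * x ^ 2)) :=
      funext fun x => gauss_pdf_smul v hv _ x
    rw [heq, integral_const_mul, integral_sq_exp _ hb]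
    have h1 : (2 * (2 * (v:ℝ))⁻¹)⁻¹ = (v:ℝ) := by
      field_simp
    have h2 : Real.sqrt (π / (2 * (v:ℝ))⁻¹) = Real.sqrt (2 * π * v) := by
      rw [div_eq_mul_inv, inv_inv]
      congr 1
      ring
    rw [h1, h2]
    have hs : 0 < Real.sqrt (2 * π * (v:ℝ)) := Real.sqrt_pos.mpr (by positivity)
    rw [show (Real.sqrt (2 * π * (v:ℝ)))⁻¹ * ((v:ℝ) * Real.sqrt (2 * π * (v:ℝ)))
        = (v:ℝ) * ((Real.sqrt (2 * π * (v:ℝ)))⁻¹ * Real.sqrt (2 * π * (v:ℝ))) by ring,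
      inv_mul_cancel₀ (ne_of_gt hs), mul_one]

lemma my_integral_pi_prod {ι : Type*} [Fintype ι] (μ : ι → Measure ℝ)
    (hσ : ∀ i, SigmaFinite (μ i)) (f : ι → ℝ → ℝ) :
    (∫ ω : ι → ℝ, ∏ i, f i (ω i) ∂Measure.pi μ) = ∏ i, ∫ x, f i x ∂μ i :=
  by haveI := hσ; exact integral_fintype_prod_eq_prod (E := fun _ => ℝ) f (μ := μ)

lemma my_integrable_pi_prod {ι : Type*} [Fintype ι] (μ : ι → Measure ℝ)
    (hσ : ∀ i, SigmaFinite (μ i)) (f : ι → ℝ → ℝ) (hf : ∀ i, Integrable (f i) (μ i)) :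
    Integrable (fun ω : ι → ℝ => ∏ i, f i (ω i)) (Measure.pi μ) :=
  by haveI := hσ; exact Integrable.fintype_prod_dep (E := fun _ => ℝ) (μ := μ) hf

section Pairing
variable {ι : Type*} (g : ι → ℕ)

def pairm (a b : ι) : {p : ι × ι // g p.1 ≤ g p.2} :=
  if h : g a ≤ g b then ⟨(a, b), h⟩ else ⟨(b, a), le_of_not_ge h⟩

variable {g}

lemma omega_pairm (ω : {p : ι × ι // g p.1 ≤ g p.2} → ℝ) (a b : ι) :
    (if h : g a ≤ g b then ω ⟨(a, b), h⟩ else ω ⟨(b, a), le_of_not_ge h⟩) = ω (pairm g a b) := by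
  unfold pairm
  split_ifs <;> rfl

lemma pairm_eq_pairm_iff (hg : Function.Injective g) {x y a b : ι} :
    pairm g x y = pairm g a b ↔ (x = a ∧ y = b) ∨ (x = b ∧ y = a) := by
  unfold pairm
  have key : ∀ {u v s t : ι} (h1 : g u ≤ g v) (h2 : g s ≤ g t),
      ((⟨(u, v), h1⟩ : {p : ι × ι // g p.1 ≤ g p.2}) = ⟨(s, t), h2⟩ ↔ u = s ∧ v = t) := by
    intro u v s t h1 h2
    simp [Subtype.ext_iff, Prod.ext_iff]
  split_ifs with h1 h2 h2
  · rw [key h1 h2]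
    constructor
    · exact Or.inl
    · rintro (h | ⟨rfl, rfl⟩)
      · exact h
      · have hab : y = x := hg (le_antisymm h2 h1)
        exact ⟨hab.symm, hab⟩
  · rw [key h1 (le_of_not_ge h2)]
    constructor
    · rintro ⟨rfl, rfl⟩; exact Or.inr ⟨rfl, rfl⟩
    · rintro (⟨rfl, rfl⟩ | ⟨rfl, rfl⟩)
      · exact absurd h1 h2
      · exact ⟨rfl, rfl⟩
  · rw [key (le_of_not_ge h1) h2]
    constructor
    · rintro ⟨rfl, rfl⟩; exact Or.inr ⟨rfl, rfl⟩
    · rintro (⟨rfl, rfl⟩ | ⟨rfl, rfl⟩)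
      · exact absurd h2 h1
      · exact ⟨rfl, rfl⟩
  · rw [key (le_of_not_ge h1) (le_of_not_ge h2)]
    constructor
    · rintro ⟨rfl, rfl⟩; exact Or.inl ⟨rfl, rfl⟩
    · rintro (⟨rfl, rfl⟩ | ⟨rfl, rfl⟩)
      · exact ⟨rfl, rfl⟩
      · have hxy : y = x := hg (le_antisymm (le_of_not_ge h1) (le_of_not_ge h2))
        exact ⟨hxy, hxy.symm⟩

lemma pairm_fst (a b : ι) (h : g a ≤ g b) : pairm g a b = ⟨(a, b), h⟩ := dif_pos h

end Pairing

lemma sign_fpf_involution {ι : Type*} [Fintype ι] [DecidableEq ι] (σ : Equiv.Perm ι)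
    (h1 : σ * σ = 1) (h2 : ∀ a, σ a ≠ a) :
    Equiv.Perm.sign σ = (-1 : ℤˣ) ^ (Fintype.card ι / 2) := by
  have hsupp : σ.support = Finset.univ := by
    ext a; simp [Equiv.Perm.mem_support, h2 a]
  have hsum : σ.cycleType.sum = Fintype.card ι := by
    rw [Equiv.Perm.sum_cycleType, hsupp, Finset.card_univ]
  have horder : orderOf σ ∣ 2 := orderOf_dvd_of_pow_eq_one (by rw [pow_two]; exact h1)
  have hall : ∀ n ∈ σ.cycleType, n = 2 := by
    intro n hn
    have hdvd : n ∣ 2 := (Multiset.dvd_lcm hn).trans (by rw [Equiv.Perm.lcm_cycleType]; exact horder)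
    exact le_antisymm (Nat.le_of_dvd (by norm_num) hdvd) (Equiv.Perm.two_le_of_mem_cycleType hn)
  have hrep : σ.cycleType = Multiset.replicate (Multiset.card σ.cycleType) 2 :=
    Multiset.eq_replicate_card.mpr hall
  set k := Multiset.card σ.cycleType with hk
  have hcard : Fintype.card ι = 2 * k := by
    rw [← hsum, hrep, Multiset.sum_replicate, smul_eq_mul]; ring
  have hdiv : Fintype.card ι / 2 = k := by omega
  rw [Equiv.Perm.sign_of_cycleType, hsum, hdiv, hcard]
  rw [pow_add, pow_mul]
  norm_num
  rfl

theorem abstract_main {ι : Type*} [Fintype ι] [DecidableEq ι]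
    (g : ι → ℕ) (hg : Function.Injective g)
    (V : {p : ι × ι // g p.1 ≤ g p.2} → ℝ≥0) :
    (∫ ω : {p : ι × ι // g p.1 ≤ g p.2} → ℝ,
        Matrix.det (Matrix.of fun a b =>
          if h : g a ≤ g b then ω ⟨(a, b), h⟩ else ω ⟨(b, a), le_of_not_ge h⟩)
        ∂(Measure.pi fun p => gaussianReal 0 (V p))) =
      ∑ σ ∈ Finset.univ.filter
          (fun σ : Equiv.Perm ι => σ * σ = 1 ∧ ∀ a, σ a ≠ a),
        ((Equiv.Perm.sign σ : ℤ) : ℝ) *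
          ∏ a ∈ Finset.univ.filter (fun a => g a < g (σ a)), (V (pairm g a (σ a)) : ℝ) := by
  classical
  let P := {p : ι × ι // g p.1 ≤ g p.2}
  let μ : P → Measure ℝ := fun p => gaussianReal 0 (V p)
  have hμ : μ = fun p => gaussianReal 0 (V p) := rfl
  haveI hprob : ∀ p, IsProbabilityMeasure (μ p) := fun p => by
    rw [hμ]; infer_instance
  let N : Equiv.Perm ι → P → ℕ := fun σ p =>
    (Finset.univ.filter (fun x => pairm g (σ x) x = p)).card
  have hNdef : N = fun σ p =>
    (Finset.univ.filter (fun x => pairm g (σ x) x = p)).card := rfl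
  -- Step 1: expand the determinant
  have hdet : ∀ ω : P → ℝ,
      Matrix.det (Matrix.of fun a b =>
        if h : g a ≤ g b then ω ⟨(a, b), h⟩ else ω ⟨(b, a), le_of_not_ge h⟩)
      = ∑ σ : Equiv.Perm ι, ((Equiv.Perm.sign σ : ℤ) : ℝ) * ∏ p : P, (ω p) ^ (N σ p) := by
    intro ω
    rw [Matrix.det_apply']
    refine Finset.sum_congr rfl fun σ _ => ?_
    congr 1
    have h1 : ∀ x : ι, (Matrix.of fun a b =>
        if h : g a ≤ g b then ω ⟨(a, b), h⟩ else ω ⟨(b, a), le_of_not_ge h⟩) (σ x) x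
        = ω (pairm g (σ x) x) := fun x => omega_pairm ω (σ x) x
    rw [Finset.prod_congr rfl fun x _ => h1 x]
    rw [← Finset.prod_fiberwise' Finset.univ (fun x => pairm g (σ x) x) ω]
    exact Finset.prod_congr rfl fun p _ => by rw [Finset.prod_const]
  -- Step 2: integrate
  have hint : ∀ σ : Equiv.Perm ι,
      Integrable (fun ω : P → ℝ => ∏ p, (ω p) ^ (N σ p)) (Measure.pi μ) :=
    fun σ => my_integrable_pi_prod μ (fun p => inferInstance) (fun p x => x ^ N σ p)
      (fun p => integrable_pow_gaussianReal _ _)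
  have hfun : (fun ω : P → ℝ => Matrix.det (Matrix.of fun a b =>
        if h : g a ≤ g b then ω ⟨(a, b), h⟩ else ω ⟨(b, a), le_of_not_ge h⟩))
      = fun ω => ∑ σ : Equiv.Perm ι, ((Equiv.Perm.sign σ : ℤ) : ℝ) * ∏ p : P, (ω p) ^ (N σ p) :=
    funext hdet
  rw [hfun, integral_finset_sum _ (fun σ _ => (hint σ).const_mul _)]
  have hval : ∀ σ : Equiv.Perm ι,
      (∫ ω : P → ℝ, ∏ p, (ω p) ^ (N σ p) ∂Measure.pi μ)
        = ∏ p : P, ∫ x, x ^ (N σ p) ∂μ p :=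
    fun σ => my_integral_pi_prod μ (fun p => inferInstance) (fun p x => x ^ N σ p)
  have hstep : (∑ σ : Equiv.Perm ι, ∫ ω : P → ℝ,
        ((Equiv.Perm.sign σ : ℤ) : ℝ) * ∏ p, (ω p) ^ (N σ p) ∂Measure.pi μ)
      = ∑ σ : Equiv.Perm ι,
          ((Equiv.Perm.sign σ : ℤ) : ℝ) * ∏ p : P, ∫ x, x ^ (N σ p) ∂μ p := by
    refine Finset.sum_congr rfl fun σ _ => ?_
    rw [integral_const_mul, hval σ]
  rw [hstep]
  -- Step 3: split according to the matching condition
  rw [← Finset.sum_filter_add_sum_filter_not Finset.univ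
    (fun σ : Equiv.Perm ι => σ * σ = 1 ∧ ∀ a, σ a ≠ a)]
  have hzero : ∀ σ ∈ Finset.univ.filter
      (fun σ : Equiv.Perm ι => ¬(σ * σ = 1 ∧ ∀ a, σ a ≠ a)),
      ((Equiv.Perm.sign σ : ℤ) : ℝ) * ∏ p : P, ∫ x, x ^ (N σ p) ∂μ p = 0 := by
    intro σ hσ
    rw [Finset.mem_filter] at hσ
    have hex : ∃ p : P, N σ p = 1 := by
      by_cases hfix : ∃ a, σ a = a
      · obtain ⟨a, ha⟩ := hfix
        refine ⟨pairm g a a, ?_⟩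
        have : Finset.univ.filter (fun x => pairm g (σ x) x = pairm g a a) = {a} := by
          ext x
          simp only [Finset.mem_filter, Finset.mem_univ, true_and, Finset.mem_singleton,
            pairm_eq_pairm_iff hg]
          constructor
          · rintro (⟨-, rfl⟩ | ⟨-, rfl⟩) <;> rfl
          · rintro rfl; exact Or.inl ⟨ha, rfl⟩
        show (Finset.univ.filter (fun x => pairm g (σ x) x = pairm g a a)).card = 1
        rw [this, Finset.card_singleton]
      · push_neg at hfix
        have hne : σ * σ ≠ 1 := fun hcon => (hσ.2 ⟨hcon, hfix⟩)
        have hex2 : ∃ a, σ (σ a) ≠ a := by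
          by_contra hcon
          push_neg at hcon
          exact hne (Equiv.ext fun x => by
            rw [Equiv.Perm.mul_apply, hcon x]; rfl)
        obtain ⟨a, ha⟩ := hex2
        refine ⟨pairm g (σ a) a, ?_⟩
        have : Finset.univ.filter (fun x => pairm g (σ x) x = pairm g (σ a) a) = {a} := by
          ext x
          simp only [Finset.mem_filter, Finset.mem_univ, true_and, Finset.mem_singleton,
            pairm_eq_pairm_iff hg]
          constructor
          · rintro (⟨-, rfl⟩ | ⟨h1, rfl⟩)
            · rfl
            · exact absurd h1 ha
          · rintro rfl; exact Or.inl ⟨rfl, rfl⟩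
        show (Finset.univ.filter (fun x => pairm g (σ x) x = pairm g (σ a) a)).card = 1
        rw [this, Finset.card_singleton]
    obtain ⟨p, hp⟩ := hex
    have : (∫ x, x ^ (N σ p) ∂μ p) = 0 := by
      rw [hp, hμ]; exact integral_id_gaussianReal _
    rw [Finset.prod_eq_zero (Finset.mem_univ p) this, mul_zero]
  rw [Finset.sum_eq_zero hzero, add_zero]
  -- Step 4: evaluate on fixed-point-free involutions
  refine Finset.sum_congr rfl fun σ hσ => ?_
  rw [Finset.mem_filter] at hσ
  obtain ⟨-, h1, h2⟩ := hσ
  have hinv : ∀ x, σ (σ x) = x := fun x => by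
    have := congrArg (fun τ : Equiv.Perm ι => τ x) h1
    simpa [Equiv.Perm.mul_apply] using this
  congr 1
  -- compute N
  have hNval : ∀ p : P, N σ p = if σ p.1.1 = p.1.2 then 2 else 0 := by
    rintro ⟨⟨a, b⟩, hab⟩
    have hpp : (⟨(a, b), hab⟩ : P) = pairm g a b := (pairm_fst a b hab).symm
    show (Finset.univ.filter (fun x => pairm g (σ x) x = ⟨(a, b), hab⟩)).card
      = if σ (a, b).1 = (a, b).2 then 2 else 0
    rw [hpp]
    by_cases h : σ a = b
    · have hba : σ b = a := by rw [← h, hinv]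
      have hne : a ≠ b := fun hcon => h2 a (by rw [← hcon] at h; exact h)
      have : Finset.univ.filter (fun x => pairm g (σ x) x = pairm g a b) = {b, a} := by
        ext x
        simp only [Finset.mem_filter, Finset.mem_univ, true_and, Finset.mem_insert,
          Finset.mem_singleton, pairm_eq_pairm_iff hg]
        constructor
        · rintro (⟨-, rfl⟩ | ⟨-, rfl⟩)
          · exact Or.inl rfl
          · exact Or.inr rfl
        · rintro (rfl | rfl)
          · exact Or.inl ⟨hba, rfl⟩
          · exact Or.inr ⟨h, rfl⟩
      rw [this, if_pos h, Finset.card_insert_of_notMem (by simpa using hne.symm),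
        Finset.card_singleton]
    · have : Finset.univ.filter (fun x => pairm g (σ x) x = pairm g a b) = ∅ := by
        ext x
        simp only [Finset.mem_filter, Finset.mem_univ, true_and, Finset.notMem_empty,
          iff_false, pairm_eq_pairm_iff hg]
        rintro (⟨hsx, rfl⟩ | ⟨hsx, rfl⟩)
        · exact h (by rw [← hsx, hinv])
        · exact h hsx
      rw [this, if_neg h, Finset.card_empty]
  have hprod : (∏ p : P, ∫ x, x ^ (N σ p) ∂μ p)
      = ∏ p ∈ Finset.univ.filter (fun p : P => σ p.1.1 = p.1.2), (V p : ℝ) := by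
    rw [Finset.prod_filter]
    refine Finset.prod_congr rfl fun p _ => ?_
    rw [hNval p]
    split_ifs with h
    · rw [hμ]; exact integral_sq_gaussianReal _
    · rw [hμ]; simp
  rw [hprod]
  -- reindex
  refine Finset.prod_nbij' (fun p => p.1.1) (fun a => pairm g a (σ a)) ?_ ?_ ?_ ?_ ?_
  · rintro ⟨⟨a, b⟩, hab⟩ hp
    rw [Finset.mem_filter] at hp ⊢
    obtain ⟨-, hQ⟩ := hp
    refine ⟨Finset.mem_univ _, ?_⟩
    show g a < g (σ a)
    replace hQ : σ a = b := hQ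
    rw [hQ]
    have hne : a ≠ b := fun hcon => h2 a (by rw [hQ]; exact hcon.symm)
    exact lt_of_le_of_ne hab (fun hcon => hne (hg hcon))
  · intro a ha
    rw [Finset.mem_filter] at ha ⊢
    refine ⟨Finset.mem_univ _, ?_⟩
    show σ (pairm g a (σ a)).1.1 = (pairm g a (σ a)).1.2
    rw [pairm_fst a (σ a) (le_of_lt ha.2)]
  · rintro ⟨⟨a, b⟩, hab⟩ hp
    rw [Finset.mem_filter] at hp
    obtain ⟨-, hQ⟩ := hp
    replace hQ : σ a = b := hQ
    show pairm g a (σ a) = ⟨(a, b), hab⟩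
    rw [hQ]
    exact pairm_fst a b hab
  · intro a ha
    rw [Finset.mem_filter] at ha
    show (pairm g a (σ a)).1.1 = a
    rw [pairm_fst a (σ a) (le_of_lt ha.2)]
  · rintro ⟨⟨a, b⟩, hab⟩ hp
    rw [Finset.mem_filter] at hp
    obtain ⟨-, hQ⟩ := hp
    replace hQ : σ a = b := hQ
    show (V ⟨(a, b), hab⟩ : ℝ) = (V (pairm g a (σ a)) : ℝ)
    rw [hQ, pairm_fst a b hab]

lemma idx_injective (r : ℕ) (m : Fin r → ℕ) : Function.Injective (idx r m) := by
  have off_le : ∀ (k1 k2 : Fin r), k1 < k2 →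
      (∑ j ∈ Finset.univ.filter (fun j => j < k1), m j) + m k1
        ≤ ∑ j ∈ Finset.univ.filter (fun j => j < k2), m j := by
    intro k1 k2 h
    have hnot : k1 ∉ Finset.univ.filter (fun j : Fin r => j < k1) := by simp
    have hsub : insert k1 (Finset.univ.filter (fun j : Fin r => j < k1))
        ⊆ Finset.univ.filter (fun j : Fin r => j < k2) := by
      intro j hj
      simp only [Finset.mem_insert, Finset.mem_filter, Finset.mem_univ, true_and] at hj ⊢
      rcases hj with rfl | hj
      · exact h
      · exact hj.trans h
    calc (∑ j ∈ Finset.univ.filter (fun j : Fin r => j < k1), m j) + m k1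
        = ∑ j ∈ insert k1 (Finset.univ.filter (fun j : Fin r => j < k1)), m j := by
          rw [Finset.sum_insert hnot]; ring
      _ ≤ ∑ j ∈ Finset.univ.filter (fun j : Fin r => j < k2), m j :=
          Finset.sum_le_sum_of_subset hsub
  rintro ⟨k1, i1⟩ ⟨k2, i2⟩ h
  unfold idx at h
  simp only at h
  rcases lt_trichotomy k1 k2 with hlt | heq | hlt
  · exfalso
    have h1 := off_le k1 k2 hlt
    have h2 := i1.isLt
    omega
  · subst heq
    have : i1 = i2 := Fin.ext (by omega)
    rw [this]
  · exfalso
    have h1 := off_le k2 k1 hlt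
    have h2 := i2.isLt
    omega

/-- let `L` be the random symmetric matrix, indexed by the grouped
vertex set, with independent centered Gaussian entries of variance `d_k(d_k − 1)` within
group `I_k` and `1` across groups (arbitrary variances `vdiag` on the diagonal), modelled
on a product of Gaussian measures over the upper-triangular index pairs. Then
`E[det L] = D_d(m₁, …, m_r)`, where `D_d` is `(−1)^{m/2}` times the sum of the weights of
all perfect matchings (identified with fixed-point-free involutions `σ`). -/
theorem expected_det_eq_matching_sum (r : ℕ) (d : Fin r → ℕ) (hd : ∀ k, 0 < d k)
    (m : Fin r → ℕ) (vdiag : GroupedIdx r m → ℝ≥0) :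
    (∫ ω : {p : GroupedIdx r m × GroupedIdx r m // idx r m p.1 ≤ idx r m p.2} → ℝ,
        Matrix.det (Matrix.of fun a b =>
          if h : idx r m a ≤ idx r m b then ω ⟨(a, b), h⟩
          else ω ⟨(b, a), le_of_not_ge h⟩)
        ∂(Measure.pi fun p =>
            gaussianReal 0
              (if p.1.1 = p.1.2 then vdiag p.1.1
               else if p.1.1.1 = p.1.2.1 then (d p.1.1.1 * (d p.1.1.1 - 1) : ℕ)
               else 1))) =
      (-1 : ℝ) ^ ((∑ k, m k) / 2) *
        ∑ σ ∈ Finset.univ.filter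
            (fun σ : Equiv.Perm (GroupedIdx r m) => σ * σ = 1 ∧ ∀ a, σ a ≠ a),
          ∏ a ∈ Finset.univ.filter (fun a => idx r m a < idx r m (σ a)),
            pairWeight r d m a (σ a) := by
  have hinj : Function.Injective (idx r m) := idx_injective r m
  refine (abstract_main (idx r m) hinj
    (fun p => if p.1.1 = p.1.2 then vdiag p.1.1
      else if p.1.1.1 = p.1.2.1 then ((d p.1.1.1 * (d p.1.1.1 - 1) : ℕ) : ℝ≥0) else 1)).trans ?_
  rw [Finset.mul_sum]
  refine Finset.sum_congr rfl fun σ hσ => ?_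
  rw [Finset.mem_filter] at hσ
  obtain ⟨-, h1, h2⟩ := hσ
  have hcard : Fintype.card (GroupedIdx r m) = ∑ k, m k := by
    simp [Fintype.card_sigma]
  have hsign : ((Equiv.Perm.sign σ : ℤ) : ℝ) = (-1 : ℝ) ^ ((∑ k, m k) / 2) := by
    rw [sign_fpf_involution σ h1 h2, hcard]
    push_cast
    norm_num
  rw [hsign]
  congr 1
  refine Finset.prod_congr rfl fun a ha => ?_
  rw [Finset.mem_filter] at ha
  have hne : a ≠ σ a := fun hcon => by
    have := ha.2
    rw [← hcon] at this
    exact lt_irrefl _ this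
  rw [pairm_fst a (σ a) (le_of_lt ha.2)]
  show ((if a = σ a then vdiag a
      else if a.1 = (σ a).1 then ((d a.1 * (d a.1 - 1) : ℕ) : ℝ≥0) else 1 : ℝ≥0) : ℝ)
    = pairWeight r d m a (σ a)
  rw [if_neg hne]
  unfold pairWeight
  split_ifs with h
  · exact NNReal.coe_natCast _
  · exact NNReal.coe_one
end
end
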